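/- arXiv:2510.18566 — 5 statements merged into one kernel-verified Lean document; each statement's English description precedes it below -/
import Mathlib

section
/- Let w ∈ ℝ^N be a probability vector, N_eff(w) = 1/∑ w_i², and q ∈ (0, 1/2). Then for any indices restricted to the first ⌊N_eff(w)⌋ coordinates, ∑_{i=1}^{⌊N_eff(w)⌋} i^{−q} w_i ≤ (1/√(1−2q)) · N_eff(w)^{−q}. -/
open Finset

/-- Integral-comparison bound: `∑_{i=1}^M i^(-p) ≤ M^(1-p)/(1-p)` for `p ∈ (0,1)`. -/
lemma aux_sum_rpow_le (p : ℝ) (hp0 : 0 < p) (hp1 : p < 1) (M : ℕ) :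
    ∑ i ∈ Finset.Icc 1 M, (i : ℝ) ^ (-p) ≤ (M : ℝ) ^ (1 - p) / (1 - p) := by
  have hs : 0 < 1 - p := by linarith
  induction M with
  | zero => simp; positivity
  | succ M ih =>
    rw [Finset.sum_Icc_succ_top (by omega)]
    have hb : (0 : ℝ) < (M : ℝ) + 1 := by positivity
    have hM0 : (0 : ℝ) ≤ (M : ℝ) := Nat.cast_nonneg M
    set s : ℝ := 1 - p with hsdef
    have amgm := Real.geom_mean_le_arith_mean2_weighted hs.le (by linarith : (0:ℝ) ≤ 1 - s)
      hM0 hb.le (by ring)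
    have hbs1 : (0 : ℝ) ≤ ((M : ℝ) + 1) ^ (s - 1) := Real.rpow_nonneg hb.le _
    have h1 : (M : ℝ) ^ s = ((M : ℝ) ^ s * ((M : ℝ) + 1) ^ (1 - s)) * ((M : ℝ) + 1) ^ (s - 1) := by
      rw [mul_assoc, ← Real.rpow_add hb]
      norm_num
    have key : (M : ℝ) ^ s + s * ((M : ℝ) + 1) ^ (s - 1) ≤ ((M : ℝ) + 1) ^ s := by
      have h2 : (M : ℝ) ^ s ≤ (s * (M : ℝ) + (1 - s) * ((M : ℝ) + 1)) * ((M : ℝ) + 1) ^ (s - 1) := by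
        rw [h1]
        exact mul_le_mul_of_nonneg_right amgm hbs1
      have h3 : ((M : ℝ) + 1) ^ s = ((M : ℝ) + 1) * ((M : ℝ) + 1) ^ (s - 1) := by
        nth_rewrite 1 [show s = 1 + (s - 1) by ring]
        rw [Real.rpow_add hb, Real.rpow_one]
      nlinarith [hbs1]
    have hnp : -p = s - 1 := by rw [hsdef]; ring
    rw [hnp] at ih ⊢
    rw [Nat.cast_succ, le_div_iff₀ hs]
    rw [le_div_iff₀ hs] at ih
    nlinarith [key, ih]

/-- Head-sum bound: for a probability vector `w` (indexed by `1,…,N`) with effective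
sample size `N_eff(w) = 1/∑ w_i²` and `q ∈ (0,1/2)`,
`∑_{i=1}^{⌊N_eff(w)⌋} i^(-q) w_i ≤ (1/√(1-2q)) · N_eff(w)^(-q)`. -/
theorem stmt_3 (N : ℕ) (hN : 0 < N) (w : ℕ → ℝ)
    (hnn : ∀ i, 0 ≤ w i) (hsum : ∑ i ∈ Finset.Icc 1 N, w i = 1)
    (hzero : ∀ i, N < i → w i = 0)
    (q : ℝ) (hq0 : 0 < q) (hq : q < 1/2) :
    ∑ i ∈ Finset.Icc 1 (Nat.floor ((∑ i ∈ Finset.Icc 1 N, (w i) ^ 2)⁻¹)),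
        (i : ℝ) ^ (-q) * w i
      ≤ (1 / Real.sqrt (1 - 2*q)) * ((∑ i ∈ Finset.Icc 1 N, (w i) ^ 2)⁻¹) ^ (-q) := by
  set S : ℝ := ∑ i ∈ Finset.Icc 1 N, (w i) ^ 2 with hSdef
  have h2q : 0 < 1 - 2*q := by linarith
  have hSnn : 0 ≤ S := Finset.sum_nonneg fun i _ => sq_nonneg _
  have hSpos : 0 < S := by
    rcases hSnn.lt_or_eq with h | h
    · exact h
    · exfalso
      have hz : ∀ i ∈ Finset.Icc 1 N, w i = 0 := by
        intro i hi
        have := (Finset.sum_eq_zero_iff_of_nonneg (fun i _ => sq_nonneg (w i))).mp h.symm i hi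
        exact pow_eq_zero_iff (two_ne_zero) |>.mp this
      rw [Finset.sum_eq_zero hz] at hsum
      norm_num at hsum
  set M : ℕ := Nat.floor S⁻¹ with hMdef
  have hMle : (M : ℝ) ≤ S⁻¹ := Nat.floor_le (by positivity)
  have hsumsq : ∑ i ∈ Finset.Icc 1 M, (w i) ^ 2 ≤ S := by
    rcases le_total M N with h | h
    · exact Finset.sum_le_sum_of_subset_of_nonneg
        (Finset.Icc_subset_Icc_right h) (fun i _ _ => sq_nonneg _)
    · refine le_of_eq (Finset.sum_subset (Finset.Icc_subset_Icc_right h) ?_).symm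
      intro i hi hni
      simp only [Finset.mem_Icc] at hi hni
      have hNi : N < i := by omega
      rw [hzero i hNi]; ring
  have hCS : (∑ i ∈ Finset.Icc 1 M, (i : ℝ) ^ (-q) * w i) ^ 2
      ≤ (∑ i ∈ Finset.Icc 1 M, ((i : ℝ) ^ (-q)) ^ 2) * ∑ i ∈ Finset.Icc 1 M, (w i) ^ 2 :=
    Finset.sum_mul_sq_le_sq_mul_sq _ _ _
  have hsq : ∀ i ∈ Finset.Icc 1 M, ((i : ℝ) ^ (-q)) ^ 2 = (i : ℝ) ^ (-(2*q)) := by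
    intro i hi
    simp only [Finset.mem_Icc] at hi
    have hipos : (0 : ℝ) < (i : ℝ) := by
      have : 0 < i := hi.1
      positivity
    rw [← Real.rpow_natCast ((i:ℝ) ^ (-q)) 2, ← Real.rpow_mul hipos.le]
    norm_num
    ring_nf
  have hrpow : ∑ i ∈ Finset.Icc 1 M, ((i : ℝ) ^ (-q)) ^ 2
      ≤ (M : ℝ) ^ (1 - 2*q) / (1 - 2*q) := by
    rw [Finset.sum_congr rfl hsq]
    exact aux_sum_rpow_le (2*q) (by linarith) (by linarith) M
  have hsumsq_nonneg : (0:ℝ) ≤ ∑ i ∈ Finset.Icc 1 M, (w i) ^ 2 :=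
    Finset.sum_nonneg fun i _ => sq_nonneg _
  have hMS : (M : ℝ) ^ (1 - 2*q) * S ≤ S ^ (2*q) := by
    have h1 : (M : ℝ) ^ (1 - 2*q) ≤ (S⁻¹) ^ (1 - 2*q) :=
      Real.rpow_le_rpow (Nat.cast_nonneg M) hMle h2q.le
    have h2 : (S⁻¹) ^ (1 - 2*q) * S = S ^ (2*q) := by
      rw [← Real.rpow_neg_one S, ← Real.rpow_mul hSpos.le]
      nth_rewrite 2 [show S = S ^ (1:ℝ) from (Real.rpow_one S).symm]
      rw [← Real.rpow_add hSpos]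
      ring_nf
    calc (M : ℝ) ^ (1 - 2*q) * S ≤ (S⁻¹) ^ (1 - 2*q) * S :=
          mul_le_mul_of_nonneg_right h1 hSnn
      _ = S ^ (2*q) := h2
  have hL : 0 ≤ ∑ i ∈ Finset.Icc 1 M, (i : ℝ) ^ (-q) * w i :=
    Finset.sum_nonneg fun i _ => mul_nonneg (Real.rpow_nonneg (Nat.cast_nonneg i) _) (hnn i)
  have hR : 0 ≤ (1 / Real.sqrt (1 - 2*q)) * (S⁻¹) ^ (-q) := by positivity
  have hR2 : ((1 / Real.sqrt (1 - 2*q)) * (S⁻¹) ^ (-q)) ^ 2 = S ^ (2*q) / (1 - 2*q) := by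
    rw [mul_pow, div_pow, one_pow, Real.sq_sqrt h2q.le,
        ← Real.rpow_natCast ((S⁻¹) ^ (-q)) 2, ← Real.rpow_mul (inv_nonneg.mpr hSnn),
        ← Real.rpow_neg_one S, ← Real.rpow_mul hSnn]
    norm_num
    rw [mul_comm q 2]
    ring
  have hsqle : (∑ i ∈ Finset.Icc 1 M, (i : ℝ) ^ (-q) * w i) ^ 2
      ≤ ((1 / Real.sqrt (1 - 2*q)) * (S⁻¹) ^ (-q)) ^ 2 := by
    rw [hR2]
    calc (∑ i ∈ Finset.Icc 1 M, (i : ℝ) ^ (-q) * w i) ^ 2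
        ≤ (∑ i ∈ Finset.Icc 1 M, ((i : ℝ) ^ (-q)) ^ 2) * ∑ i ∈ Finset.Icc 1 M, (w i) ^ 2 := hCS
      _ ≤ ((M : ℝ) ^ (1 - 2*q) / (1 - 2*q)) * S :=
          mul_le_mul hrpow hsumsq hsumsq_nonneg (by positivity)
      _ = ((M : ℝ) ^ (1 - 2*q) * S) / (1 - 2*q) := by ring
      _ ≤ S ^ (2*q) / (1 - 2*q) := by gcongr
  calc ∑ i ∈ Finset.Icc 1 M, (i : ℝ) ^ (-q) * w i
      = Real.sqrt ((∑ i ∈ Finset.Icc 1 M, (i : ℝ) ^ (-q) * w i) ^ 2) := (Real.sqrt_sq hL).symm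
    _ ≤ Real.sqrt (((1 / Real.sqrt (1 - 2*q)) * (S⁻¹) ^ (-q)) ^ 2) := Real.sqrt_le_sqrt hsqle
    _ = (1 / Real.sqrt (1 - 2*q)) * (S⁻¹) ^ (-q) := Real.sqrt_sq hR
end

section
/- Let w ∈ ℝ^N be a probability vector and q ∈ (0, 1/2). Then ∑_{i=1}^N i^{−q} w_i ≤ (1 + 1/√(1−2q)) · N_eff(w)^{−q}, where N_eff(w) = 1/∑_{i=1}^N w_i². -/
open Finset

/-- Sum comparison: `∑_{i=1}^n i^(-p) ≤ n^(1-p)/(1-p)` for `p ∈ (0,1)`. -/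
lemma sum_rpow_le (p : ℝ) (hp0 : 0 < p) (hp1 : p < 1) (n : ℕ) (hn : 1 ≤ n) :
    ∑ i ∈ Finset.Icc 1 n, (i : ℝ) ^ (-p) ≤ (n : ℝ) ^ (1 - p) / (1 - p) := by
  have h1p : (0:ℝ) < 1 - p := by linarith
  have hanti : AntitoneOn (fun x : ℝ => x ^ (-p)) (Set.Icc 1 (1 + (n - 1 : ℕ))) := by
    intro x hx y hy hxy
    exact Real.rpow_le_rpow_of_nonpos (lt_of_lt_of_le one_pos hx.1) hxy (by linarith)
  have hint : ∑ i ∈ Finset.range (n - 1), ((1 : ℝ) + (i + 1 : ℕ)) ^ (-p)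
      ≤ ∫ x in (1:ℝ)..(1 + (n - 1 : ℕ)), x ^ (-p) := hanti.sum_le_integral
  have hcast : (1 : ℝ) + (n - 1 : ℕ) = (n : ℝ) := by
    have : (n - 1 : ℕ) = (n : ℝ) - 1 := by
      push_cast [Nat.cast_sub hn]; ring
    rw [this]; ring
  have hval : (∫ x in (1:ℝ)..(1 + (n - 1 : ℕ)), x ^ (-p))
      = ((n:ℝ) ^ (1 - p) - 1) / (1 - p) := by
    rw [hcast, integral_rpow (Or.inl (by linarith))]
    rw [Real.one_rpow]
    ring_nf
  -- rewrite LHS sum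
  have hsplit : ∑ i ∈ Finset.Icc 1 n, (i : ℝ) ^ (-p)
      = 1 + ∑ i ∈ Finset.range (n - 1), ((1 : ℝ) + (i + 1 : ℕ)) ^ (-p) := by
    rw [show Finset.Icc 1 n = Finset.Ico 1 (n+1) by rfl]
    rw [Finset.sum_Ico_eq_sum_range]
    rw [show n + 1 - 1 = n by omega]
    rw [show n = (n - 1) + 1 by omega, Finset.sum_range_succ']
    rw [show (n - 1 + 1) - 1 = n - 1 by omega]
    simp only [Nat.cast_add, Nat.cast_one, Nat.cast_zero]
    rw [add_comm]
    congr 1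
    norm_num
  rw [hsplit]
  have h2 : (1:ℝ) + ((n:ℝ) ^ (1 - p) - 1) / (1 - p) ≤ (n : ℝ) ^ (1 - p) / (1 - p) := by
    have h : (1:ℝ) ≤ 1/(1-p) := by rw [le_div_iff₀ h1p]; linarith
    have he : ((n:ℝ) ^ (1 - p) - 1) / (1 - p) + 1/(1-p) = (n:ℝ) ^ (1-p)/(1-p) := by
      field_simp
      ring
    linarith
  calc 1 + ∑ i ∈ Finset.range (n - 1), ((1 : ℝ) + (i + 1 : ℕ)) ^ (-p)
      ≤ 1 + ((n:ℝ) ^ (1 - p) - 1) / (1 - p) := by rw [← hval]; linarith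
    _ ≤ _ := h2

/-- For a probability vector `w` (indexed by `1,…,N`) and `q ∈ (0,1/2)`,
`∑_{i=1}^N i^(-q) w_i ≤ (1 + 1/√(1-2q)) · N_eff(w)^(-q)` with `N_eff(w) = 1/∑ w_i²`. -/
theorem stmt_6 (N : ℕ) (hN : 0 < N) (w : ℕ → ℝ)
    (hnn : ∀ i, 0 ≤ w i) (hsum : ∑ i ∈ Finset.Icc 1 N, w i = 1)
    (q : ℝ) (hq0 : 0 < q) (hq : q < 1/2) :
    ∑ i ∈ Finset.Icc 1 N, (i : ℝ) ^ (-q) * w i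
      ≤ (1 + 1 / Real.sqrt (1 - 2*q)) * ((∑ i ∈ Finset.Icc 1 N, (w i) ^ 2)⁻¹) ^ (-q) := by
  have h2q : (0:ℝ) < 1 - 2*q := by linarith
  set S : ℝ := ∑ i ∈ Finset.Icc 1 N, (w i) ^ 2 with hSdef
  have hS0 : 0 < S := by
    rcases (show ∃ i ∈ Finset.Icc 1 N, 0 < w i by
      by_contra h
      push_neg at h
      have : ∑ i ∈ Finset.Icc 1 N, w i = 0 :=
        Finset.sum_eq_zero fun i hi => le_antisymm (h i hi) (hnn i)
      rw [this] at hsum; norm_num at hsum) with ⟨i, hi, hwi⟩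
    exact Finset.sum_pos' (fun j _ => sq_nonneg _) ⟨i, hi, by positivity⟩
  have hwle1 : ∀ i ∈ Finset.Icc 1 N, w i ≤ 1 := by
    intro i hi
    calc w i ≤ ∑ j ∈ Finset.Icc 1 N, w j :=
          Finset.single_le_sum (fun j _ => hnn j) hi
      _ = 1 := hsum
  have hS1 : S ≤ 1 := by
    calc S ≤ ∑ i ∈ Finset.Icc 1 N, w i := by
          apply Finset.sum_le_sum
          intro i hi
          have := hnn i
          nlinarith [hwle1 i hi]
      _ = 1 := hsum
  set M : ℝ := S⁻¹ with hMdef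
  have hM1 : 1 ≤ M := (one_le_inv₀ hS0).mpr hS1
  have hM0 : 0 < M := lt_of_lt_of_le one_pos hM1
  set n : ℕ := ⌊M⌋₊ with hndef
  have hn1 : 1 ≤ n := Nat.le_floor (by exact_mod_cast hM1)
  have hnM : (n : ℝ) ≤ M := Nat.floor_le hM0.le
  have hMn : M < n + 1 := Nat.lt_floor_add_one M
  set A : Finset ℕ := (Finset.Icc 1 N).filter (fun i => i ≤ n) with hA
  set B : Finset ℕ := (Finset.Icc 1 N).filter (fun i => ¬ i ≤ n) with hB
  have hsplit : ∑ i ∈ Finset.Icc 1 N, (i : ℝ) ^ (-q) * w i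
      = ∑ i ∈ A, (i : ℝ) ^ (-q) * w i + ∑ i ∈ B, (i : ℝ) ^ (-q) * w i :=
    (Finset.sum_filter_add_sum_filter_not _ _ _).symm
  -- bound on B
  have hBbound : ∑ i ∈ B, (i : ℝ) ^ (-q) * w i ≤ M ^ (-q) := by
    have h1 : ∑ i ∈ B, (i : ℝ) ^ (-q) * w i ≤ ∑ i ∈ B, M ^ (-q) * w i := by
      apply Finset.sum_le_sum
      intro i hi
      rw [hB, Finset.mem_filter] at hi
      have hiM : M ≤ (i : ℝ) := by
        have : n + 1 ≤ i := by omega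
        have : ((n:ℝ) + 1) ≤ (i:ℝ) := by exact_mod_cast this
        linarith
      exact mul_le_mul_of_nonneg_right
        (Real.rpow_le_rpow_of_nonpos hM0 hiM (by linarith)) (hnn i)
    have h2 : ∑ i ∈ B, M ^ (-q) * w i = M ^ (-q) * ∑ i ∈ B, w i := by
      rw [Finset.mul_sum]
    have h3 : ∑ i ∈ B, w i ≤ 1 := by
      rw [← hsum]
      exact Finset.sum_le_sum_of_subset_of_nonneg (Finset.filter_subset _ _)
        (fun i _ _ => hnn i)
    have h4 : (0:ℝ) ≤ M ^ (-q) := Real.rpow_nonneg hM0.le _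
    calc ∑ i ∈ B, (i : ℝ) ^ (-q) * w i ≤ M ^ (-q) * ∑ i ∈ B, w i := by rw [← h2]; exact h1
      _ ≤ M ^ (-q) * 1 := by nlinarith
      _ = M ^ (-q) := mul_one _
  -- bound on A
  have hAbound : ∑ i ∈ A, (i : ℝ) ^ (-q) * w i ≤ M ^ (-q) / Real.sqrt (1 - 2*q) := by
    have hcs : ∑ i ∈ A, (i : ℝ) ^ (-q) * w i
        ≤ Real.sqrt (∑ i ∈ A, ((i : ℝ) ^ (-q)) ^ 2) * Real.sqrt (∑ i ∈ A, (w i) ^ 2) :=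
      Real.sum_mul_le_sqrt_mul_sqrt A _ _
    have hAsq : ∑ i ∈ A, ((i : ℝ) ^ (-q)) ^ 2 ≤ M ^ (1 - 2*q) / (1 - 2*q) := by
      have hsub : A ⊆ Finset.Icc 1 n := by
        intro i hi
        rw [hA, Finset.mem_filter, Finset.mem_Icc] at hi
        rw [Finset.mem_Icc]
        exact ⟨hi.1.1, hi.2⟩
      have h1 : ∑ i ∈ A, ((i : ℝ) ^ (-q)) ^ 2 ≤ ∑ i ∈ Finset.Icc 1 n, ((i : ℝ) ^ (-q)) ^ 2 :=
        Finset.sum_le_sum_of_subset_of_nonneg hsub (fun i _ _ => sq_nonneg _)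
      have h2 : ∀ i ∈ Finset.Icc 1 n, ((i : ℝ) ^ (-q)) ^ 2 = (i : ℝ) ^ (-(2*q)) := by
        intro i hi
        rw [Finset.mem_Icc] at hi
        have : (0:ℝ) ≤ (i:ℝ) := Nat.cast_nonneg i
        rw [← Real.rpow_natCast ((i:ℝ) ^ (-q)) 2, ← Real.rpow_mul this]
        norm_num
        ring_nf
      rw [Finset.sum_congr rfl h2] at h1
      have h3 := sum_rpow_le (2*q) (by linarith) (by linarith) n hn1
      rw [show (1 - 2*q) = 1 - 2*q by ring] at h3
      have h4 : (n:ℝ) ^ (1 - 2*q) ≤ M ^ (1 - 2*q) := by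
        apply Real.rpow_le_rpow (Nat.cast_nonneg n) hnM (by linarith)
      calc ∑ i ∈ A, ((i : ℝ) ^ (-q)) ^ 2 ≤ (n:ℝ) ^ (1 - 2*q) / (1 - 2*q) := h1.trans h3
        _ ≤ M ^ (1 - 2*q) / (1 - 2*q) := by gcongr
    have hAw : ∑ i ∈ A, (w i) ^ 2 ≤ S := by
      rw [hSdef]
      exact Finset.sum_le_sum_of_subset_of_nonneg (Finset.filter_subset _ _)
        (fun i _ _ => sq_nonneg _)
    have hsq1 : Real.sqrt (∑ i ∈ A, ((i : ℝ) ^ (-q)) ^ 2)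
        ≤ Real.sqrt (M ^ (1 - 2*q) / (1 - 2*q)) := Real.sqrt_le_sqrt hAsq
    have hsq2 : Real.sqrt (∑ i ∈ A, (w i) ^ 2) ≤ Real.sqrt S := Real.sqrt_le_sqrt hAw
    have hkey : Real.sqrt (M ^ (1 - 2*q) / (1 - 2*q)) * Real.sqrt S
        = M ^ (-q) / Real.sqrt (1 - 2*q) := by
      have hSM : S = M⁻¹ := by rw [hMdef, inv_inv]
      have e1 : M ^ (1 - 2*q) * S = M ^ (-(2*q)) := by
        rw [hSM, ← Real.rpow_neg_one M, ← Real.rpow_add hM0]; ring_nf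
      have e2 : Real.sqrt (M ^ (-(2*q))) = M ^ (-q) := by
        rw [show -(2*q) = (-q) * 2 by ring, Real.rpow_mul hM0.le, Real.rpow_two,
          Real.sqrt_sq (Real.rpow_nonneg hM0.le _)]
      rw [Real.sqrt_div (by positivity : (0:ℝ) ≤ M ^ (1 - 2*q)),
        div_mul_eq_mul_div, ← Real.sqrt_mul (by positivity) S, e1, e2]
    calc ∑ i ∈ A, (i : ℝ) ^ (-q) * w i
        ≤ Real.sqrt (∑ i ∈ A, ((i : ℝ) ^ (-q)) ^ 2) * Real.sqrt (∑ i ∈ A, (w i) ^ 2) := hcs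
      _ ≤ Real.sqrt (M ^ (1 - 2*q) / (1 - 2*q)) * Real.sqrt S :=
          mul_le_mul hsq1 hsq2 (Real.sqrt_nonneg _) (Real.sqrt_nonneg _)
      _ = M ^ (-q) / Real.sqrt (1 - 2*q) := hkey
  rw [hsplit]
  have hrhs : (1 + 1 / Real.sqrt (1 - 2*q)) * M ^ (-q)
      = M ^ (-q) / Real.sqrt (1 - 2*q) + M ^ (-q) := by
    field_simp
    ring
  calc ∑ i ∈ A, (i : ℝ) ^ (-q) * w i + ∑ i ∈ B, (i : ℝ) ^ (-q) * w i
      ≤ M ^ (-q) / Real.sqrt (1 - 2*q) + M ^ (-q) := add_le_add hAbound hBbound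
    _ = (1 + 1 / Real.sqrt (1 - 2*q)) * M ^ (-q) := hrhs.symm
end

section
/- Suppose there is a constant c_0 > 0 and q ∈ (0,1) such that E[W_p^p((1/k)∑_{i=1}^k δ_{X_i}, P)] ≤ c_0 k^{−q} for every k ≥ 1, where X_1, X_2, ... are i.i.d. with law P. Then for any probability weights w_1 ≥ ... ≥ w_N ≥ 0 summing to 1, E[W_p^p(∑_{i=1}^N w_i δ_{X_i}, P)] ≤ c_0 ∑_{i=1}^N i^{−q} w_i. -/
set_option linter.unusedSectionVars false

open MeasureTheory ENNReal

noncomputable section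

/-- The set of couplings of two measures. -/
def Couplings {E : Type*} [MeasurableSpace E] (μ ν : Measure E) : Set (Measure (E × E)) :=
  {γ | γ.map Prod.fst = μ ∧ γ.map Prod.snd = ν}

/-- The optimal transport cost with cost `dist^p` (this is `W_p^p`). -/
def transportCost {E : Type*} [MeasurableSpace E] [PseudoMetricSpace E]
    (p : ℝ) (μ ν : Measure E) : ℝ≥0∞ :=
  ⨅ γ ∈ Couplings μ ν, ∫⁻ x, (edist x.1 x.2) ^ p ∂γ

namespace StmtAux

/-- Abel summation helper. -/
lemma abel_aux (B v : ℕ → ℝ) : ∀ n : ℕ,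
    (∑ k ∈ Finset.range n, B (k+1) * (v k - v (k+1))) + B n * v n
      = (∑ k ∈ Finset.range n, (B (k+1) - B k) * v k) + B 0 * v 0
  | 0 => by simp
  | (n+1) => by
    have ih := abel_aux B v n
    rw [Finset.sum_range_succ, Finset.sum_range_succ]
    nlinarith [ih]

lemma map_finset_sum {α β : Type*} [MeasurableSpace α] [MeasurableSpace β] {f : α → β}
    (hf : Measurable f) {ι : Type*} (s : Finset ι) (μ : ι → Measure α) :
    (∑ i ∈ s, μ i).map f = ∑ i ∈ s, (μ i).map f := by
  classical
  induction s using Finset.cons_induction with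
  | empty => simp
  | cons a s ha ih =>
      rw [Finset.sum_cons, Finset.sum_cons, Measure.map_add _ _ hf, ih]

variable {E : Type*} [MeasurableSpace E] [MetricSpace E]
  [SecondCountableTopology E] [BorelSpace E]

lemma meas_cost (p : ℝ) : Measurable fun z : E × E => edist z.1 z.2 ^ p :=
  ENNReal.continuous_rpow_const.measurable.comp measurable_edist

lemma meas_cost_right (p : ℝ) (u : E) : Measurable fun v : E => edist u v ^ p :=
  ENNReal.continuous_rpow_const.measurable.comp (measurable_edist_right)

/-- decompositions of `P` into `m` pieces each of mass `1/m`. -/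
def famSet (P : Measure E) (m : ℕ) : Set (ℕ → Measure E) :=
  {μ | (∀ i ∈ Finset.range m, μ i Set.univ = ((m : ℝ≥0∞))⁻¹) ∧ ∑ i ∈ Finset.range m, μ i = P}

def famCost (p : ℝ) (m : ℕ) (x : ℕ → E) (μ : ℕ → Measure E) : ℝ≥0∞ :=
  ∑ i ∈ Finset.range m, ∫⁻ v, edist (x i) v ^ p ∂(μ i)

def Dfun (p : ℝ) (P : Measure E) (m : ℕ) (x : ℕ → E) : ℝ≥0∞ :=
  ⨅ μ ∈ famSet P m, famCost p m x μ

lemma mem_famSet_const (P : Measure E) [IsProbabilityMeasure P] {m : ℕ} (hm : m ≠ 0) :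
    (fun _ : ℕ => ((m : ℝ≥0∞))⁻¹ • P) ∈ famSet P m := by
  simp only [famSet, Set.mem_setOf_eq]
  constructor
  · intro i _
    simp [Measure.smul_apply]
  · rw [Finset.sum_const, Finset.card_range, ← Nat.cast_smul_eq_nsmul ℝ≥0∞, smul_smul,
      ENNReal.mul_inv_cancel (by exact_mod_cast hm) (natCast_ne_top m), one_smul]

lemma add_rpow_le {p : ℝ} (hp : 1 ≤ p) (η a b : ℝ≥0∞) (hη0 : η ≠ 0) (hηt : η ≠ ∞) :
    (a + b) ^ p ≤ ((1 + η) / η) ^ p * a ^ p + (1 + η) ^ p * b ^ p := by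
  have hp0 : (0:ℝ) ≤ p := le_trans zero_le_one hp
  rcases le_total a (η * b) with h | h
  · have hab : a + b ≤ (1 + η) * b := by
      calc a + b ≤ η * b + b := add_le_add_left h _
        _ = (1 + η) * b := by ring
    calc (a + b) ^ p ≤ ((1 + η) * b) ^ p := ENNReal.rpow_le_rpow hab hp0
      _ = (1 + η) ^ p * b ^ p := ENNReal.mul_rpow_of_nonneg _ _ hp0
      _ ≤ _ := le_add_self
  · have hb : b ≤ a / η := by
      rw [ENNReal.le_div_iff_mul_le (Or.inl hη0) (Or.inl hηt), mul_comm]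
      exact h
    have hab : a + b ≤ ((1 + η) / η) * a := by
      have h2 : ((1 + η) / η) * a = a + a / η := by
        rw [ENNReal.add_div, ENNReal.div_self hη0 hηt, add_mul, one_mul,
          ENNReal.div_eq_inv_mul, ENNReal.div_eq_inv_mul]
        ring
      rw [h2]
      exact add_le_add_right hb _
    calc (a + b) ^ p ≤ (((1 + η) / η) * a) ^ p := ENNReal.rpow_le_rpow hab hp0
      _ = ((1 + η) / η) ^ p * a ^ p := ENNReal.mul_rpow_of_nonneg _ _ hp0
      _ ≤ _ := le_self_add

lemma lintegral_edist_rpow_le {p : ℝ} (hp : 1 ≤ p) (μ : Measure E) (u u' : E)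
    (η : ℝ≥0∞) (hη0 : η ≠ 0) (hηt : η ≠ ∞) :
    ∫⁻ v, edist u v ^ p ∂μ
      ≤ ((1 + η) / η) ^ p * edist u u' ^ p * μ Set.univ + (1 + η) ^ p * ∫⁻ v, edist u' v ^ p ∂μ := by
  have hp0 : (0:ℝ) ≤ p := le_trans zero_le_one hp
  have h1 : ∀ v, edist u v ^ p
      ≤ ((1 + η) / η) ^ p * edist u u' ^ p + (1 + η) ^ p * edist u' v ^ p := fun v => by
    calc edist u v ^ p ≤ (edist u u' + edist u' v) ^ p :=
          ENNReal.rpow_le_rpow (edist_triangle _ _ _) hp0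
      _ ≤ _ := add_rpow_le hp η _ _ hη0 hηt
  calc ∫⁻ v, edist u v ^ p ∂μ
      ≤ ∫⁻ v, (((1 + η) / η) ^ p * edist u u' ^ p + (1 + η) ^ p * edist u' v ^ p) ∂μ :=
        lintegral_mono h1
    _ = _ := by
        rw [lintegral_add_left measurable_const, lintegral_const,
          lintegral_const_mul _ (meas_cost_right p u')]

lemma measurable_Dfun (p : ℝ) (hp : 1 ≤ p) (P : Measure E) [IsProbabilityMeasure P] (m : ℕ) :
    Measurable (Dfun p P m) := by
  have hp0 : (0:ℝ) ≤ p := le_trans zero_le_one hp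
  have hpne : p ≠ 0 := by linarith
  apply measurable_of_Iio
  intro a
  suffices h : IsOpen {x : ℕ → E | Dfun p P m x < a} by
    exact h.measurableSet
  rw [isOpen_iff_mem_nhds]
  intro x₀ hx₀
  simp only [Set.mem_setOf_eq, Dfun, iInf_lt_iff] at hx₀
  obtain ⟨μ0, hμ0, hC⟩ := hx₀
  obtain ⟨t, hct, hta⟩ := exists_between hC
  have htt : t ≠ ∞ := hta.ne_top
  obtain ⟨t', hct', ht't⟩ := exists_between hct
  have ht't' : t' ≠ ∞ := ht't.ne_top
  have hCfin : famCost p m x₀ μ0 ≠ ∞ := hct'.ne_top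
  -- choose η
  have htend : Filter.Tendsto (fun η : ℝ≥0∞ => (1 + η) ^ p * famCost p m x₀ μ0)
      (nhds 0) (nhds (famCost p m x₀ μ0)) := by
    have h1 : Filter.Tendsto (fun η : ℝ≥0∞ => 1 + η) (nhds 0) (nhds 1) := by
      simpa using (continuous_add_left (1 : ℝ≥0∞)).tendsto 0
    have h2 := ((ENNReal.continuous_rpow_const (y := p)).tendsto (1 : ℝ≥0∞)).comp h1
    rw [ENNReal.one_rpow] at h2
    have h3 := ENNReal.Tendsto.mul_const h2 (Or.inl one_ne_zero)
      (b := famCost p m x₀ μ0)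
    rwa [one_mul] at h3
  have hev := htend.eventually_lt_const hct'
  obtain ⟨η₀, hη₀pos, hη₀⟩ := ENNReal.nhds_zero_basis.eventually_iff.mp hev
  set η : ℝ≥0∞ := min (η₀ / 2) 1 with hηdef
  have hη0 : η ≠ 0 := by
    simp only [hηdef, ne_eq, min_eq_iff]
    rintro (⟨h, -⟩ | ⟨h, -⟩)
    · exact absurd h (by simp [ENNReal.div_eq_zero_iff, hη₀pos.ne'])
    · exact one_ne_zero h
  have hηt : η ≠ ∞ := ((min_le_right _ _).trans_lt (by norm_num)).ne
  have hηlt : η < η₀ := by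
    rcases eq_or_ne η₀ ∞ with h | h
    · exact (min_le_right _ _).trans_lt (by rw [h]; exact ENNReal.one_lt_top)
    · exact (min_le_left _ _).trans_lt (ENNReal.half_lt_self hη₀pos.ne' h)
  have hηbound : (1 + η) ^ p * famCost p m x₀ μ0 < t' := hη₀ (Set.mem_Iio.mpr hηlt)
  -- the constant K
  set K : ℝ≥0∞ := ((1 + η) / η) ^ p with hKdef
  have hbase0 : (0:ℝ≥0∞) < (1 + η) / η := by
    simp only [pos_iff_ne_zero, ne_eq, ENNReal.div_eq_zero_iff, not_or]
    exact ⟨(lt_of_lt_of_le zero_lt_one le_self_add).ne', hηt⟩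
  have hbaset : (1 + η) / η ≠ ∞ := (ENNReal.div_lt_top (by simp [hηt]) hη0).ne
  have hKne0 : K ≠ 0 := (ENNReal.rpow_pos hbase0 hbaset).ne'
  have hKnetop : K ≠ ∞ := ENNReal.rpow_ne_top_of_nonneg hp0 hbaset
  -- choose δ
  set M : ℝ≥0∞ := min (t - t') 1 with hMdef
  have hM0 : M ≠ 0 := by
    simp only [hMdef, ne_eq, min_eq_iff]
    rintro (⟨h, -⟩ | ⟨h, -⟩)
    · exact absurd h (by simp [tsub_eq_zero_iff_le, not_le, ht't])
    · exact one_ne_zero h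
  have hMt : M ≠ ∞ := ((min_le_right _ _).trans_lt (by norm_num)).ne
  set r : ℝ≥0∞ := M / 2 / K with hrdef
  have hr0 : r ≠ 0 := by
    simp only [hrdef, ne_eq, ENNReal.div_eq_zero_iff, not_or]
    exact ⟨by simp [ENNReal.div_eq_zero_iff, hM0], hKnetop⟩
  have hrt : r ≠ ∞ := by
    simp only [hrdef]
    exact (ENNReal.div_lt_top (ENNReal.div_lt_top hMt (by norm_num)).ne hKne0).ne
  set δ : ℝ≥0∞ := r ^ p⁻¹ with hδdef
  have hδ0 : δ ≠ 0 := by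
    simp only [hδdef]
    exact (ENNReal.rpow_pos (pos_iff_ne_zero.mpr hr0) hrt).ne'
  have hδp : δ ^ p = r := by
    rw [hδdef, ← ENNReal.rpow_mul, inv_mul_cancel₀ hpne, ENNReal.rpow_one]
  have hKδ : K * δ ^ p < t - t' := by
    rw [hδp, hrdef]
    have heq : K * (M / 2 / K) = M / 2 := by
      rw [ENNReal.div_eq_inv_mul, ← mul_assoc,
        ENNReal.mul_inv_cancel hKne0 hKnetop, one_mul]
    rw [heq]
    exact lt_of_lt_of_le (ENNReal.half_lt_self hM0 hMt) (min_le_left _ _)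
  -- the neighbourhood
  have hVmem : (⋂ i ∈ Finset.range m, (fun x : ℕ → E => x i) ⁻¹' Metric.eball (x₀ i) δ)
      ∈ nhds x₀ :=
    (Filter.biInter_finset_mem (Finset.range m)).mpr
      (fun i _ => (continuous_apply i).continuousAt.preimage_mem_nhds
        (Metric.eball_mem_nhds _ (pos_iff_ne_zero.mpr hδ0)))
  refine Filter.mem_of_superset hVmem ?_
  intro x hx
  simp only [Set.mem_iInter, Set.mem_preimage, Metric.mem_eball] at hx
  have hxd : ∀ i ∈ Finset.range m, edist (x i) (x₀ i) ^ p ≤ δ ^ p := fun i hi =>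
    ENNReal.rpow_le_rpow (hx i hi).le hp0
  have hsum1 : ∑ i ∈ Finset.range m, μ0 i Set.univ = 1 := by
    rw [← Measure.finset_sum_apply, hμ0.2, measure_univ]
  have hbound : famCost p m x μ0 ≤ K * δ ^ p + (1 + η) ^ p * famCost p m x₀ μ0 := by
    calc famCost p m x μ0
        ≤ ∑ i ∈ Finset.range m,
            (K * edist (x i) (x₀ i) ^ p * μ0 i Set.univ
              + (1 + η) ^ p * ∫⁻ v, edist (x₀ i) v ^ p ∂(μ0 i)) :=
          Finset.sum_le_sum fun i _ => lintegral_edist_rpow_le hp (μ0 i) (x i) (x₀ i) η hη0 hηt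
      _ = (∑ i ∈ Finset.range m, K * edist (x i) (x₀ i) ^ p * μ0 i Set.univ)
            + (1 + η) ^ p * famCost p m x₀ μ0 := by
          rw [Finset.sum_add_distrib, ← Finset.mul_sum]; rfl
      _ ≤ (∑ i ∈ Finset.range m, K * δ ^ p * μ0 i Set.univ)
            + (1 + η) ^ p * famCost p m x₀ μ0 := by
          gcongr with i hi
          exact (hx i hi).le
      _ = K * δ ^ p + (1 + η) ^ p * famCost p m x₀ μ0 := by
          rw [← Finset.mul_sum, hsum1, mul_one]
  have hlt : famCost p m x μ0 < a := by
    calc famCost p m x μ0 ≤ K * δ ^ p + (1 + η) ^ p * famCost p m x₀ μ0 := hbound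
      _ < (t - t') + t' := ENNReal.add_lt_add hKδ hηbound
      _ = t := tsub_add_cancel_of_le ht't.le
      _ < a := hta
  show Dfun p P m x < a
  have hD : Dfun p P m x ≤ famCost p m x μ0 := by
    unfold Dfun; exact iInf₂_le μ0 hμ0
  exact lt_of_le_of_lt hD hlt

lemma Dfun_le_transportCost (p : ℝ) (hp : 1 ≤ p) (P : Measure E) [IsProbabilityMeasure P]
    (m : ℕ) (x : ℕ → E) :
    Dfun p P m x
      ≤ transportCost p (∑ i ∈ Finset.range m, ((m : ℝ≥0∞))⁻¹ • Measure.dirac (x i)) P := by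
  classical
  refine le_iInf₂ fun γ hγ => ?_
  obtain ⟨hfst, hsnd⟩ := hγ
  set c : E → ℕ := fun a => ((Finset.range m).filter (fun j => x j = a)).card with hc
  set A : E → Set (E × E) := fun a => Prod.fst ⁻¹' {a} with hA
  have hAm : ∀ a, MeasurableSet (A a) := fun a => measurable_fst (measurableSet_singleton a)
  set ν : E → Measure E := fun a => (γ.restrict (A a)).map Prod.snd with hν
  set μf : ℕ → Measure E := fun i => ((c (x i) : ℝ≥0∞))⁻¹ • ν (x i) with hμf
  set img : Finset E := (Finset.range m).image x with himg
  -- basic measure computations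
  have hγA : ∀ a, γ (A a) = ((m : ℝ≥0∞))⁻¹ * c a := by
    intro a
    have h1 : γ (A a) = (γ.map Prod.fst) {a} :=
      (Measure.map_apply measurable_fst (measurableSet_singleton a)).symm
    rw [h1, hfst, Measure.finset_sum_apply]
    have h2 : ∀ i ∈ Finset.range m,
        (((m : ℝ≥0∞))⁻¹ • Measure.dirac (x i)) {a}
          = ((m : ℝ≥0∞))⁻¹ * (if x i = a then 1 else 0) := by
      intro i _
      rw [Measure.smul_apply, smul_eq_mul, Measure.dirac_apply' _ (measurableSet_singleton a)]
      by_cases h : x i = a <;> simp [Set.indicator, h]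
    rw [Finset.sum_congr rfl h2, ← Finset.mul_sum]
    congr 1
    rw [Finset.sum_boole]
  have hνuniv : ∀ a, ν a Set.univ = ((m : ℝ≥0∞))⁻¹ * c a := by
    intro a
    rw [hν]
    rw [Measure.map_apply measurable_snd MeasurableSet.univ, Set.preimage_univ,
      Measure.restrict_apply_univ, hγA]
  have hcx : ∀ a, a ∈ img → (c a : ℝ≥0∞) ≠ 0 := by
    intro a ha
    obtain ⟨i, hi, hxi⟩ := Finset.mem_image.mp ha
    have hmem : i ∈ (Finset.range m).filter (fun j => x j = a) := by
      simp [Finset.mem_filter, hi, hxi]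
    simp only [ne_eq, Nat.cast_eq_zero, hc]
    exact fun h => absurd (Finset.card_eq_zero.mp h ▸ hmem) (by simp)
  -- μf is in famSet
  have hμfuniv : ∀ i ∈ Finset.range m, μf i Set.univ = ((m : ℝ≥0∞))⁻¹ := by
    intro i hi
    have hxim : x i ∈ img := Finset.mem_image_of_mem x hi
    rw [hμf]
    simp only [Measure.smul_apply, smul_eq_mul]
    rw [hνuniv, ← mul_assoc, mul_comm ((c (x i) : ℝ≥0∞))⁻¹,
      mul_assoc, ENNReal.inv_mul_cancel (hcx _ hxim) (natCast_ne_top _), mul_one]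
  -- pairwise disjointness of the fibres
  have hdisj : Set.PairwiseDisjoint (↑img) A := by
    intro a _ b _ hab
    simp only [Function.onFun, hA]
    refine Set.disjoint_left.mpr fun z hza hzb => ?_
    simp only [Set.mem_preimage, Set.mem_singleton_iff] at hza hzb
    exact hab (hza ▸ hzb ▸ rfl)
  have hUnull : γ ((⋃ a ∈ img, A a)ᶜ) = 0 := by
    have hmeasU : MeasurableSet (↑img : Set E) := img.countable_toSet.measurableSet
    have hU : (⋃ a ∈ img, A a) = Prod.fst ⁻¹' (↑img : Set E) := by
      rw [hA]
      ext z
      simp only [Set.mem_iUnion, Set.mem_preimage, Set.mem_singleton_iff, Finset.mem_coe]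
      constructor
      · rintro ⟨a, ha, h⟩; exact h ▸ ha
      · intro h; exact ⟨z.1, h, rfl⟩
    rw [hU, ← Set.preimage_compl,
      ← Measure.map_apply measurable_fst hmeasU.compl, hfst, Measure.finset_sum_apply]
    refine Finset.sum_eq_zero fun i hi => ?_
    rw [Measure.smul_apply, smul_eq_mul, Measure.dirac_apply' _ hmeasU.compl]
    have hxim : x i ∈ (↑img : Set E) := Finset.mem_coe.mpr (Finset.mem_image_of_mem x hi)
    rw [Set.indicator_of_notMem (by simp [hxim])]
    simp
  have haemem : ∀ᵐ z ∂γ, z ∈ ⋃ a ∈ img, A a := mem_ae_iff.mpr hUnull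
  have hrestr_sum : ∑ a ∈ img, γ.restrict (A a) = γ.restrict (⋃ a ∈ img, A a) := by
    ext s hs
    rw [Measure.finset_sum_apply, Measure.restrict_apply hs, Set.inter_iUnion₂]
    rw [measure_biUnion_finset
      (fun a ha b hb hab => ((hdisj ha hb hab).mono Set.inter_subset_right
        Set.inter_subset_right : Disjoint (s ∩ A a) (s ∩ A b)))
      (fun b _ => hs.inter (hAm b))]
    exact Finset.sum_congr rfl fun a _ => Measure.restrict_apply hs
  have hrestrU : γ.restrict (⋃ a ∈ img, A a) = γ :=
    Measure.restrict_eq_self_of_ae_mem haemem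
  have hν_sum : ∑ a ∈ img, ν a = P := by
    calc ∑ a ∈ img, ν a = (∑ a ∈ img, γ.restrict (A a)).map Prod.snd :=
          (map_finset_sum measurable_snd _ _).symm
      _ = γ.map Prod.snd := by rw [hrestr_sum, hrestrU]
      _ = P := hsnd
  have hμf_sum : ∑ i ∈ Finset.range m, μf i = P := by
    rw [← Finset.sum_fiberwise_of_maps_to (fun i hi => Finset.mem_image_of_mem x hi) μf]
    refine Eq.trans (Finset.sum_congr rfl fun a ha => ?_) hν_sum
    have h1 : ∀ i ∈ (Finset.range m).filter (fun i => x i = a),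
        μf i = ((c a : ℝ≥0∞))⁻¹ • ν a := by
      intro i hi
      rw [hμf]
      simp only
      rw [(Finset.mem_filter.mp hi).2]
    rw [Finset.sum_congr rfl h1, Finset.sum_const]
    have hcard : ((Finset.range m).filter fun i => x i = a).card = c a := rfl
    rw [hcard, ← Nat.cast_smul_eq_nsmul ℝ≥0∞, smul_smul,
      ENNReal.mul_inv_cancel (hcx a ha) (natCast_ne_top _), one_smul]
  -- cost estimate
  set I : E → ℝ≥0∞ := fun a => ∫⁻ z in A a, edist z.1 z.2 ^ p ∂γ with hI
  have hterm : ∀ i ∈ Finset.range m,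
      ∫⁻ v, edist (x i) v ^ p ∂(μf i) = ((c (x i) : ℝ≥0∞))⁻¹ * I (x i) := by
    intro i hi
    rw [hμf]
    simp only
    rw [lintegral_smul_measure, hν]
    simp only
    rw [lintegral_map (meas_cost_right p (x i)) measurable_snd]
    congr 1
    refine setLIntegral_congr_fun (hAm (x i)) (fun z hz => ?_)
    rw [show z.1 = x i from hz]
  have hcost : famCost p m x μf ≤ ∫⁻ z, edist z.1 z.2 ^ p ∂γ := by
    rw [famCost, Finset.sum_congr rfl hterm,
      ← Finset.sum_fiberwise_of_maps_to (fun i hi => Finset.mem_image_of_mem x hi)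
        (fun i => ((c (x i) : ℝ≥0∞))⁻¹ * I (x i))]
    have h2 : ∀ a ∈ img,
        (∑ i ∈ (Finset.range m).filter (fun i => x i = a),
          ((c (x i) : ℝ≥0∞))⁻¹ * I (x i)) = I a := by
      intro a ha
      have h1 : ∀ i ∈ (Finset.range m).filter (fun i => x i = a),
          ((c (x i) : ℝ≥0∞))⁻¹ * I (x i) = ((c a : ℝ≥0∞))⁻¹ * I a := by
        intro i hi
        rw [(Finset.mem_filter.mp hi).2]
      rw [Finset.sum_congr rfl h1, Finset.sum_const]
      have hcard : ((Finset.range m).filter fun i => x i = a).card = c a := rfl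
      rw [hcard, nsmul_eq_mul, ← mul_assoc,
        ENNReal.mul_inv_cancel (hcx a ha) (natCast_ne_top _), one_mul]
    rw [Finset.sum_congr rfl h2, hI]
    rw [← lintegral_biUnion_finset hdisj (fun b _ => hAm b)]
    exact lintegral_mono' Measure.restrict_le_self le_rfl
  refine le_trans ?_ hcost
  unfold Dfun
  exact iInf₂_le μf ⟨hμfuniv, hμf_sum⟩


lemma transportCost_mix_le (p : ℝ) (hp : 1 ≤ p) (P : Measure E) [IsProbabilityMeasure P]
    (N : ℕ) (l : ℕ → ℝ≥0∞) (hl : ∑ k ∈ Finset.range N, l k = 1) (y : ℕ → E) :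
    transportCost p
        (∑ k ∈ Finset.range N,
          l k • (∑ i ∈ Finset.range (k+1), (((k+1 : ℕ) : ℝ≥0∞))⁻¹ • Measure.dirac (y i))) P
      ≤ ∑ k ∈ Finset.range N, l k * Dfun p P (k+1) y := by
  classical
  refine ENNReal.le_of_forall_pos_le_add fun ε hε hfin => ?_
  have hch : ∀ k : ℕ, ∃ μ : ℕ → Measure E, μ ∈ famSet P (k+1)
      ∧ famCost p (k+1) y μ ≤ Dfun p P (k+1) y + ε := by
    intro k
    by_cases hD : Dfun p P (k+1) y = ∞
    · exact ⟨fun _ => (((k+1 : ℕ) : ℝ≥0∞))⁻¹ • P, mem_famSet_const P (Nat.succ_ne_zero k),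
        by rw [hD]; simp⟩
    · have hlt : (⨅ μ ∈ famSet P (k+1), famCost p (k+1) y μ)
          < Dfun p P (k+1) y + ε := by
        have : Dfun p P (k+1) y < Dfun p P (k+1) y + ε :=
          ENNReal.lt_add_right hD (by exact_mod_cast hε.ne')
        exact this
      simp only [iInf_lt_iff] at hlt
      obtain ⟨μ0, hmem, hcost⟩ := hlt
      exact ⟨μ0, hmem, hcost.le⟩
  choose μs hmem hcost using hch
  have hfm : ∀ k i, i ∈ Finset.range (k+1) → IsFiniteMeasure (μs k i) := by
    intro k i hi
    refine ⟨?_⟩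
    rw [(hmem k).1 i hi]
    exact ENNReal.inv_lt_top.mpr (by exact_mod_cast Nat.succ_pos k)
  set γ : Measure (E × E) := ∑ k ∈ Finset.range N,
    l k • (∑ i ∈ Finset.range (k+1), (Measure.dirac (y i)).prod (μs k i)) with hγdef
  have hfst : γ.map Prod.fst = ∑ k ∈ Finset.range N,
      l k • (∑ i ∈ Finset.range (k+1), (((k+1 : ℕ) : ℝ≥0∞))⁻¹ • Measure.dirac (y i)) := by
    rw [hγdef, map_finset_sum measurable_fst]
    refine Finset.sum_congr rfl fun k _ => ?_
    rw [Measure.map_smul, map_finset_sum measurable_fst]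
    congr 1
    refine Finset.sum_congr rfl fun i hi => ?_
    haveI := hfm k i hi
    rw [Measure.map_fst_prod, (hmem k).1 i hi]
  have hsnd : γ.map Prod.snd = P := by
    rw [hγdef, map_finset_sum measurable_snd]
    have h1 : ∀ k ∈ Finset.range N,
        (l k • (∑ i ∈ Finset.range (k+1), (Measure.dirac (y i)).prod (μs k i))).map Prod.snd
          = l k • P := by
      intro k _
      rw [Measure.map_smul, map_finset_sum measurable_snd]
      congr 1
      have h2 : ∀ i ∈ Finset.range (k+1),
          ((Measure.dirac (y i)).prod (μs k i)).map Prod.snd = μs k i := by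
        intro i hi
        haveI := hfm k i hi
        rw [Measure.map_snd_prod]
        simp
      rw [Finset.sum_congr rfl h2, (hmem k).2]
    rw [Finset.sum_congr rfl h1, ← Finset.sum_smul, hl, one_smul]
  have hγcost : ∫⁻ z, edist z.1 z.2 ^ p ∂γ
      = ∑ k ∈ Finset.range N, l k * famCost p (k+1) y (μs k) := by
    rw [hγdef, lintegral_finset_sum_measure]
    refine Finset.sum_congr rfl fun k _ => ?_
    rw [lintegral_smul_measure]
    congr 1
    rw [lintegral_finset_sum_measure]
    refine Finset.sum_congr rfl fun i hi => ?_
    haveI := hfm k i hi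
    rw [Measure.dirac_prod, lintegral_map (meas_cost p) measurable_prodMk_left]
  have hmain : transportCost p
      (∑ k ∈ Finset.range N,
        l k • (∑ i ∈ Finset.range (k+1), (((k+1 : ℕ) : ℝ≥0∞))⁻¹ • Measure.dirac (y i))) P
      ≤ ∑ k ∈ Finset.range N, l k * famCost p (k+1) y (μs k) := by
    rw [← hγcost]
    exact iInf₂_le γ ⟨hfst, hsnd⟩
  refine hmain.trans ?_
  calc ∑ k ∈ Finset.range N, l k * famCost p (k+1) y (μs k)
      ≤ ∑ k ∈ Finset.range N, l k * (Dfun p P (k+1) y + ε) :=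
        Finset.sum_le_sum fun k _ => mul_le_mul_right (hcost k) _
    _ = (∑ k ∈ Finset.range N, l k * Dfun p P (k+1) y) + (∑ k ∈ Finset.range N, l k) * ε := by
        rw [Finset.sum_mul]
        rw [← Finset.sum_add_distrib]
        exact Finset.sum_congr rfl fun k _ => mul_add _ _ _
    _ = (∑ k ∈ Finset.range N, l k * Dfun p P (k+1) y) + ε := by rw [hl, one_mul]

end StmtAux

/-- If `E[W_p^p((1/k)∑_{i=1}^k δ_{X_i}, P)] ≤ c₀ k^(-q)` for all `k ≥ 1`, with
`X_1, X_2, …` i.i.d. with law `P`, then for nonincreasing probability weights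
`w_1 ≥ … ≥ w_N`, `E[W_p^p(∑_i w_i δ_{X_i}, P)] ≤ c₀ ∑_i i^(-q) w_i`.
(Indices are 0-based: `X i` is the `(i+1)`-st sample and `w i` its weight.) -/
theorem stmt_7 {E : Type*} [MeasurableSpace E] [MetricSpace E] [CompleteSpace E]
    [SecondCountableTopology E] [BorelSpace E]
    {Ω : Type*} [MeasurableSpace Ω] (μ : Measure Ω) [IsProbabilityMeasure μ]
    (P : Measure E) [IsProbabilityMeasure P]
    (X : ℕ → Ω → E) (hXmeas : ∀ i, Measurable (X i))
    (hXlaw : ∀ i, μ.map (X i) = P)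
    (hXindep : ProbabilityTheory.iIndepFun X μ)
    (c₀ q p : ℝ) (hc₀ : 0 < c₀) (hq0 : 0 < q) (hq1 : q < 1) (hp : 1 ≤ p)
    (hmoment : ∀ k : ℕ, 1 ≤ k →
      ∫⁻ ω, transportCost p
          (∑ i ∈ Finset.range k, ((k : ℝ≥0∞))⁻¹ • Measure.dirac (X i ω)) P ∂μ
        ≤ ENNReal.ofReal (c₀ * (k : ℝ) ^ (-q)))
    (N : ℕ) (hN : 1 ≤ N) (w : ℕ → ℝ)
    (hw_nn : ∀ i, 0 ≤ w i)
    (hw_mono : ∀ i, i + 1 < N → w (i + 1) ≤ w i)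
    (hw_sum : ∑ i ∈ Finset.range N, w i = 1) :
    ∫⁻ ω, transportCost p
        (∑ i ∈ Finset.range N, ENNReal.ofReal (w i) • Measure.dirac (X i ω)) P ∂μ
      ≤ ENNReal.ofReal (c₀ * ∑ i ∈ Finset.range N, ((i : ℝ) + 1) ^ (-q) * w i) := by
  classical
  set v : ℕ → ℝ := fun k => if k < N then w k else 0 with hv
  have hv_nn : ∀ k, 0 ≤ v k := fun k => by
    by_cases h : k < N <;> simp [hv, h, hw_nn]
  have hv_mono : ∀ k, v (k+1) ≤ v k := by
    intro k
    by_cases h1 : k + 1 < N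
    · have h2 : k < N := Nat.lt_of_succ_lt h1
      simpa [hv, h1, h2] using hw_mono k h1
    · simp only [hv, if_neg h1]
      exact hv_nn k
  have hvN : v N = 0 := by simp [hv]
  set a : ℕ → ℝ := fun k => ((k : ℝ) + 1) * (v k - v (k+1)) with ha
  have ha_nn : ∀ k, 0 ≤ a k := fun k =>
    mul_nonneg (by positivity) (sub_nonneg.mpr (hv_mono k))
  set l : ℕ → ℝ≥0∞ := fun k => ENNReal.ofReal (a k) with hldef
  -- the weights sum to one
  have hsum_a : ∑ k ∈ Finset.range N, a k = 1 := by
    have h := StmtAux.abel_aux (fun k => (k : ℝ)) v N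
    rw [hvN] at h
    simp only [mul_zero, add_zero, Nat.cast_zero, zero_mul] at h
    have h2 : ∑ k ∈ Finset.range N, a k
        = ∑ k ∈ Finset.range N, ((k : ℕ) + 1 : ℝ) * (v k - v (k+1)) := by
      refine Finset.sum_congr rfl fun k _ => ?_
      rw [ha]
    rw [h2]
    have h3 : ∑ k ∈ Finset.range N, (((k:ℕ) + 1 : ℕ) : ℝ) * (v k - v (k+1))
        = ∑ k ∈ Finset.range N, ((k : ℕ) + 1 : ℝ) * (v k - v (k+1)) := by
      refine Finset.sum_congr rfl fun k _ => ?_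
      push_cast
      ring
    rw [← h3, h]
    have h4 : ∑ k ∈ Finset.range N, ((((k:ℕ)+1:ℕ):ℝ) - ((k:ℕ):ℝ)) * v k
        = ∑ k ∈ Finset.range N, v k := by
      refine Finset.sum_congr rfl fun k _ => ?_
      push_cast
      ring
    rw [h4, ← hw_sum]
    refine Finset.sum_congr rfl fun k hk => ?_
    simp [hv, Finset.mem_range.mp hk]
  have hl1 : ∑ k ∈ Finset.range N, l k = 1 := by
    rw [hldef]
    rw [← ENNReal.ofReal_sum_of_nonneg (fun i _ => ha_nn i), hsum_a, ENNReal.ofReal_one]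
  -- decomposition of the weighted empirical measure
  have hcoef : ∀ k : ℕ,
      l k * (((k+1 : ℕ) : ℝ≥0∞))⁻¹ = ENNReal.ofReal (v k - v (k+1)) := by
    intro k
    rw [hldef]
    simp only
    rw [ha]
    simp only
    rw [ENNReal.ofReal_mul (by positivity)]
    have hcast : ENNReal.ofReal ((k : ℝ) + 1) = ((k+1 : ℕ) : ℝ≥0∞) := by
      rw [← ENNReal.ofReal_natCast (k+1)]
      congr 1
      push_cast
      ring
    rw [hcast, mul_comm (((k+1 : ℕ) : ℝ≥0∞)) _, mul_assoc,
      ENNReal.mul_inv_cancel (by exact_mod_cast Nat.succ_ne_zero k) (natCast_ne_top _), mul_one]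
  have hdecomp : ∀ y : ℕ → E,
      (∑ i ∈ Finset.range N, ENNReal.ofReal (w i) • Measure.dirac (y i))
        = ∑ k ∈ Finset.range N,
            l k • (∑ i ∈ Finset.range (k+1), (((k+1 : ℕ) : ℝ≥0∞))⁻¹ • Measure.dirac (y i)) := by
    intro y
    have h1 : ∀ k ∈ Finset.range N,
        l k • (∑ i ∈ Finset.range (k+1), (((k+1 : ℕ) : ℝ≥0∞))⁻¹ • Measure.dirac (y i))
          = ∑ i ∈ Finset.range (k+1), ENNReal.ofReal (v k - v (k+1)) • Measure.dirac (y i) := by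
      intro k _
      rw [Finset.smul_sum]
      refine Finset.sum_congr rfl fun i _ => ?_
      rw [smul_smul, hcoef k]
    rw [Finset.sum_congr rfl h1]
    rw [Finset.sum_comm' (s := Finset.range N) (t := fun k => Finset.range (k+1))
      (t' := Finset.range N) (s' := fun i => Finset.Ico i N)
      (by intro k i; simp only [Finset.mem_range, Finset.mem_Ico]; omega)]
    refine Finset.sum_congr rfl fun i hi => ?_
    rw [← Finset.sum_smul]
    congr 1
    rw [← ENNReal.ofReal_sum_of_nonneg (fun k _ => sub_nonneg.mpr (hv_mono k))]
    congr 1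
    have hiN : i ≤ N := (Finset.mem_range.mp hi).le
    rw [Finset.sum_Ico_eq_sub _ hiN, Finset.sum_range_sub' v, Finset.sum_range_sub' v, hvN]
    have hvi : v i = w i := by simp [hv, Finset.mem_range.mp hi]
    rw [hvi]
    ring
  -- pointwise bound
  have hpt : ∀ ω, transportCost p
      (∑ i ∈ Finset.range N, ENNReal.ofReal (w i) • Measure.dirac (X i ω)) P
      ≤ ∑ k ∈ Finset.range N, l k * StmtAux.Dfun p P (k+1) (fun i => X i ω) := by
    intro ω
    rw [hdecomp (fun i => X i ω)]
    exact StmtAux.transportCost_mix_le p hp P N l hl1 _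
  have hGmeas : ∀ k : ℕ, Measurable fun ω => StmtAux.Dfun p P (k+1) (fun i => X i ω) :=
    fun k => (StmtAux.measurable_Dfun p hp P (k+1)).comp
      (measurable_pi_lambda _ fun i => hXmeas i)
  have hGbound : ∀ k : ℕ, ∫⁻ ω, StmtAux.Dfun p P (k+1) (fun i => X i ω) ∂μ
      ≤ ENNReal.ofReal (c₀ * ((k+1 : ℕ) : ℝ) ^ (-q)) := by
    intro k
    refine le_trans (lintegral_mono fun ω => StmtAux.Dfun_le_transportCost p hp P (k+1) _) ?_
    exact hmoment (k+1) (Nat.le_add_left 1 k)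
  calc ∫⁻ ω, transportCost p
        (∑ i ∈ Finset.range N, ENNReal.ofReal (w i) • Measure.dirac (X i ω)) P ∂μ
      ≤ ∫⁻ ω, ∑ k ∈ Finset.range N, l k * StmtAux.Dfun p P (k+1) (fun i => X i ω) ∂μ :=
        lintegral_mono hpt
    _ = ∑ k ∈ Finset.range N, ∫⁻ ω, l k * StmtAux.Dfun p P (k+1) (fun i => X i ω) ∂μ :=
        lintegral_finset_sum _ (fun k _ => (hGmeas k).const_mul (l k))
    _ = ∑ k ∈ Finset.range N, l k * ∫⁻ ω, StmtAux.Dfun p P (k+1) (fun i => X i ω) ∂μ :=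
        Finset.sum_congr rfl fun k _ => lintegral_const_mul _ (hGmeas k)
    _ ≤ ∑ k ∈ Finset.range N, l k * ENNReal.ofReal (c₀ * ((k+1 : ℕ) : ℝ) ^ (-q)) :=
        Finset.sum_le_sum fun k _ => mul_le_mul_right (hGbound k) _
    _ ≤ ENNReal.ofReal (c₀ * ∑ i ∈ Finset.range N, ((i : ℝ) + 1) ^ (-q) * w i) := by
        have hterm : ∀ k : ℕ, l k * ENNReal.ofReal (c₀ * ((k+1 : ℕ) : ℝ) ^ (-q))
            = ENNReal.ofReal (a k * (c₀ * ((k : ℝ) + 1) ^ (-q))) := by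
          intro k
          rw [hldef]
          simp only
          rw [← ENNReal.ofReal_mul (ha_nn k)]
          congr 2
          push_cast
          ring
        rw [Finset.sum_congr rfl fun k _ => hterm k]
        rw [← ENNReal.ofReal_sum_of_nonneg (fun k _ =>
          mul_nonneg (ha_nn k) (mul_nonneg hc₀.le (Real.rpow_nonneg (by positivity) _)))]
        apply ENNReal.ofReal_le_ofReal
        -- the real-number inequality
        set B : ℕ → ℝ := fun j => (j : ℝ) ^ (1 - q) with hB
        have hBsucc : ∀ k : ℕ, B (k+1) = ((k : ℝ) + 1) * ((k : ℝ) + 1) ^ (-q) := by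
          intro k
          rw [hB]
          simp only
          push_cast
          rw [show (1:ℝ) - q = 1 + (-q) by ring, Real.rpow_add (by positivity), Real.rpow_one]
        have hstep : ∀ k : ℕ, a k * (c₀ * ((k : ℝ) + 1) ^ (-q))
            = c₀ * (B (k+1) * (v k - v (k+1))) := by
          intro k
          rw [ha, hBsucc k]
          simp only
          ring
        rw [Finset.sum_congr rfl fun k _ => hstep k, ← Finset.mul_sum]
        apply mul_le_mul_of_nonneg_left ?_ hc₀.le
        have habel := StmtAux.abel_aux B v N
        rw [hvN] at habel
        have hB0 : B 0 = 0 := by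
          rw [hB]
          simp only [Nat.cast_zero]
          exact Real.zero_rpow (by linarith)
        rw [hB0] at habel
        simp only [mul_zero, add_zero, zero_mul] at habel
        rw [habel]
        refine Finset.sum_le_sum fun k hk => ?_
        have hvk : v k = w k := by simp [hv, Finset.mem_range.mp hk]
        rw [hvk]
        apply mul_le_mul_of_nonneg_right ?_ (hw_nn k)
        -- B (k+1) - B k ≤ ((k : ℝ) + 1) ^ (-q)
        have hk2 : (k : ℝ) * ((k : ℝ) + 1) ^ (-q) ≤ B k := by
          rcases Nat.eq_zero_or_pos k with h | h
          · subst h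
            simp only [Nat.cast_zero, zero_mul]
            rw [hB]
            simp only [Nat.cast_zero]
            rw [Real.zero_rpow (by linarith)]
          · have hkpos : (0:ℝ) < (k : ℝ) := by exact_mod_cast h
            have hBk : B k = (k : ℝ) * (k : ℝ) ^ (-q) := by
              rw [hB]
              simp only
              rw [show (1:ℝ) - q = 1 + (-q) by ring, Real.rpow_add hkpos, Real.rpow_one]
            rw [hBk]
            apply mul_le_mul_of_nonneg_left ?_ hkpos.le
            exact Real.rpow_le_rpow_of_nonpos hkpos (by linarith) (by linarith)
        have hk1 := hBsucc k
        nlinarith [hk1, hk2]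
end
end

section
/- Fix p ≥ 1, ε > 0, ρ > 0, and T ≥ 1. Every maximizer of the function w ↦ T_eff(w)·(ε − D_p(w)ρ)_+^{2p} over the probability simplex in ℝ^T, where T_eff(w) = 1/∑ w_t² and D_p(w) = (∑_t w_t (T−t+1)^p)^{1/p}, that satisfies ε > D_p(w)ρ must have the form w_t = (c_1 − c_2 (T−t+1)^p)_+ for some constants c_1, c_2 ≥ 0. -/
open Filter Set


lemma aux_deriv (p ε ρ : ℝ) (hp : 1 ≤ p) (hρ : 0 < ρ)
    (S0 c e A0 b : ℝ) (hS0 : 0 < S0) (hA0 : 0 < A0)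
    (hsl : A0 ^ (1/p) * ρ < ε)
    (h : ℝ → ℝ)
    (hh : ∀ s, h s = (S0 + s*c + s^2*e)⁻¹ *
        (max (ε - (A0 + s*b) ^ (1/p) * ρ) 0) ^ (2*p))
    (δ : ℝ) (hδ : 0 < δ) (hmax : ∀ s, 0 ≤ s → s ≤ δ → h s ≤ h 0) :
    0 ≤ c * (ε - A0 ^ (1/p) * ρ) ^ (2*p)
        + S0 * (2 * ρ * (ε - A0 ^ (1/p) * ρ) ^ (2*p-1) * A0 ^ (1/p-1)) * b := by
  have hp0 : (0:ℝ) < p := lt_of_lt_of_le one_pos hp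
  have hGbase : 0 < ε - A0 ^ (1/p) * ρ := by linarith
  -- derivative of q
  have hq : HasDerivAt (fun s : ℝ => S0 + s*c + s^2*e) c 0 := by
    have h1 := (((hasDerivAt_id (0:ℝ)).mul_const c).const_add S0).add
      ((hasDerivAt_pow 2 (0:ℝ)).mul_const e)
    exact h1.congr_deriv (by norm_num)
  have hq0 : (fun s : ℝ => S0 + s*c + s^2*e) 0 ≠ 0 := by
    simp only []; norm_num; positivity
  have hqinv := hq.inv hq0
  -- derivative of inner
  have hL : HasDerivAt (fun s : ℝ => A0 + s*b) b 0 := by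
    have h1 := ((hasDerivAt_id (0:ℝ)).mul_const b).const_add A0
    exact h1.congr_deriv (by norm_num)
  have hL0 : (fun s : ℝ => A0 + s*b) 0 = A0 := by norm_num
  have hr : HasDerivAt (fun s : ℝ => (A0 + s*b) ^ (1/p))
      (b * (1/p) * A0 ^ (1/p - 1)) 0 := by
    have := hL.rpow_const (p := 1/p) (Or.inl (by simp only [zero_mul, add_zero]; exact ne_of_gt hA0))
    simp only [zero_mul, add_zero] at this
    exact this
  have hinner : HasDerivAt (fun s : ℝ => ε - (A0 + s*b) ^ (1/p) * ρ)
      (-(b * (1/p) * A0 ^ (1/p - 1) * ρ)) 0 := (hr.mul_const ρ).const_sub ε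
  have hinner0 : (fun s : ℝ => ε - (A0 + s*b) ^ (1/p) * ρ) 0 = ε - A0 ^ (1/p) * ρ := by
    norm_num
  have houter : HasDerivAt (fun s : ℝ => (ε - (A0 + s*b) ^ (1/p) * ρ) ^ (2*p))
      (-(b * (1/p) * A0 ^ (1/p - 1) * ρ) * (2*p) * (ε - A0 ^ (1/p) * ρ) ^ (2*p - 1)) 0 := by
    have := hinner.rpow_const (p := 2*p) (Or.inl (by simp only [zero_mul, add_zero]; exact ne_of_gt hGbase))
    simp only [zero_mul, add_zero] at this
    exact this
  set G := (ε - A0 ^ (1/p) * ρ) ^ (2*p) with hG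
  set G' := (ε - A0 ^ (1/p) * ρ) ^ (2*p - 1) with hG'
  have hφ : HasDerivAt (fun s : ℝ =>
      (S0 + s*c + s^2*e)⁻¹ * (ε - (A0 + s*b) ^ (1/p) * ρ) ^ (2*p))
      ((-c / (S0 + 0*c + 0^2*e) ^ 2) * (ε - (A0 + 0*b) ^ (1/p) * ρ) ^ (2*p)
        + (S0 + 0*c + 0^2*e)⁻¹ *
          (-(b * (1/p) * A0 ^ (1/p - 1) * ρ) * (2*p) * G')) 0 :=
    hqinv.mul houter
  simp only [zero_mul, add_zero, ne_eq, OfNat.ofNat_ne_zero, not_false_eq_true, zero_pow,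
    mul_zero] at hφ
  set D0 : ℝ := -c / S0 ^ 2 * G + S0⁻¹ * (-(b * (1/p) * A0 ^ (1/p - 1) * ρ) * (2*p) * G')
    with hD0def
  have hφ' : HasDerivAt (fun s : ℝ =>
      (S0 + s*c + s^2*e)⁻¹ * (ε - (A0 + s*b) ^ (1/p) * ρ) ^ (2*p)) D0 0 := hφ
  -- transfer to h
  have heq : h =ᶠ[nhds (0:ℝ)] (fun s : ℝ =>
      (S0 + s*c + s^2*e)⁻¹ * (ε - (A0 + s*b) ^ (1/p) * ρ) ^ (2*p)) := by
    have hcont : ContinuousAt (fun s : ℝ => ε - (A0 + s*b) ^ (1/p) * ρ) 0 :=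
      hinner.continuousAt
    have hev : ∀ᶠ s in nhds (0:ℝ), 0 < ε - (A0 + s*b) ^ (1/p) * ρ := by
      have := hcont.eventually (eventually_gt_nhds (by rw [hinner0]; exact hGbase))
      simpa [hinner0] using this
    filter_upwards [hev] with s hs
    rw [hh s, max_eq_left hs.le]
  have hd : HasDerivAt h D0 0 := hφ'.congr_of_eventuallyEq heq
  -- D0 ≤ 0
  have hD0 : D0 ≤ 0 := by
    by_contra hc
    push_neg at hc
    have hslope := hasDerivAt_iff_tendsto_slope.mp hd
    have h1 : ∀ᶠ s in nhdsWithin (0:ℝ) (Set.Ioi 0), 0 < slope h 0 s := by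
      have : ∀ᶠ s in nhdsWithin (0:ℝ) ({(0:ℝ)}ᶜ), 0 < slope h 0 s :=
        hslope.eventually (eventually_gt_nhds hc)
      exact this.filter_mono (nhdsWithin_mono _ (fun x hx => ne_of_gt hx))
    have h2 : Set.Ioc (0:ℝ) δ ∈ nhdsWithin (0:ℝ) (Set.Ioi 0) :=
      Ioc_mem_nhdsGT_of_mem ⟨le_refl _, hδ⟩
    obtain ⟨s, hs1, hs2⟩ := (h1.and (eventually_of_mem h2 (fun x hx => hx))).exists
    have hspos : 0 < s := hs2.1
    rw [slope_def_field, sub_zero] at hs1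
    have h3 : 0 < h s - h 0 := by
      have h4 := mul_pos hs1 hspos
      rwa [div_mul_cancel₀ _ (ne_of_gt hspos)] at h4
    have h5 := hmax s hspos.le hs2.2
    linarith
  -- algebra
  have hkey : c * G + S0 * (2 * ρ * G' * A0 ^ (1/p-1)) * b = -(S0^2) * D0 := by
    rw [hD0def]
    field_simp
    ring
  rw [hG, hG'] at hkey ⊢
  rw [hkey]
  have : (0:ℝ) ≤ S0^2 * (-D0) := mul_nonneg (by positivity) (by linarith)
  linarith


/-- Structure of optimal weights: any maximizer `w` of
`T_eff(w)·(ε - D_p(w)ρ)_+^(2p)` over the probability simplex in `ℝ^T` at which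
`ε > D_p(w)ρ` has the truncated-polynomial form
`w_t = (c_1 - c_2 (T - t + 1)^p)_+` for some constants `c_1, c_2 ≥ 0`. -/
theorem stmt_14 (T : ℕ) (hT : 1 ≤ T) (p ε ρ : ℝ) (hp : 1 ≤ p) (hε : 0 < ε) (hρ : 0 < ρ)
    (F : (ℕ → ℝ) → ℝ)
    (hF : ∀ v, F v = (∑ t ∈ Finset.Icc 1 T, (v t) ^ 2)⁻¹ *
      (max (ε - (∑ t ∈ Finset.Icc 1 T, v t * ((T : ℝ) - (t : ℝ) + 1) ^ p) ^ (1/p) * ρ) 0)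
        ^ (2 * p))
    (w : ℕ → ℝ)
    (hw_nn : ∀ t, 0 ≤ w t) (hw_sum : ∑ t ∈ Finset.Icc 1 T, w t = 1)
    (hw_max : ∀ v : ℕ → ℝ, (∀ t, 0 ≤ v t) → (∑ t ∈ Finset.Icc 1 T, v t = 1) → F v ≤ F w)
    (hslack : (∑ t ∈ Finset.Icc 1 T, w t * ((T : ℝ) - (t : ℝ) + 1) ^ p) ^ (1/p) * ρ < ε) :
    ∃ c₁ c₂ : ℝ, 0 ≤ c₁ ∧ 0 ≤ c₂ ∧
      ∀ t ∈ Finset.Icc 1 T, w t = max (c₁ - c₂ * ((T : ℝ) - (t : ℝ) + 1) ^ p) 0 := by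
  classical
  set N := Finset.Icc 1 T with hNdef
  have hp0 : (0:ℝ) < p := lt_of_lt_of_le one_pos hp
  have ha_pos : ∀ t ∈ N, 0 < ((T : ℝ) - (t : ℝ) + 1) ^ p := by
    intro t ht
    rw [hNdef, Finset.mem_Icc] at ht
    have h1 : (t:ℝ) ≤ T := Nat.cast_le.mpr ht.2
    exact Real.rpow_pos_of_pos (by linarith) p
  obtain ⟨i₀, hi₀N, hi₀⟩ : ∃ i ∈ N, 0 < w i := by
    by_contra hcon
    push_neg at hcon
    have h0 : ∑ t ∈ N, w t = 0 :=
      Finset.sum_eq_zero (fun t ht => le_antisymm (hcon t ht) (hw_nn t))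
    rw [hw_sum] at h0
    norm_num at h0
  set S := ∑ t ∈ N, (w t)^2 with hSdef
  set A := ∑ t ∈ N, w t * ((T : ℝ) - (t : ℝ) + 1) ^ p with hAdef
  have hS : 0 < S := by
    have h1 : (w i₀)^2 ≤ S :=
      Finset.single_le_sum (f := fun t => (w t)^2) (fun t _ => sq_nonneg _) hi₀N
    nlinarith
  have hA : 0 < A := by
    rw [hAdef]
    apply Finset.sum_pos' (fun t ht => mul_nonneg (hw_nn t) (ha_pos t ht).le)
    exact ⟨i₀, hi₀N, mul_pos hi₀ (ha_pos i₀ hi₀N)⟩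
  have hGbase : 0 < ε - A ^ (1/p) * ρ := by linarith
  set G := (ε - A ^ (1/p) * ρ) ^ (2*p) with hGdef
  set β := 2 * ρ * (ε - A ^ (1/p) * ρ) ^ (2*p-1) * A ^ (1/p-1) with hβdef
  have hGpos : 0 < G := Real.rpow_pos_of_pos hGbase _
  have hβpos : 0 < β := by
    rw [hβdef]
    have h1 : 0 < (ε - A ^ (1/p) * ρ) ^ (2*p-1) := Real.rpow_pos_of_pos hGbase _
    have h2 : 0 < A ^ (1/p-1) := Real.rpow_pos_of_pos hA _
    positivity
  -- KKT-type inequality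
  have key : ∀ i ∈ N, 0 < w i → ∀ j ∈ N,
      2*G*(w i) + S*β*((T : ℝ) - (i : ℝ) + 1) ^ p ≤
      2*G*(w j) + S*β*((T : ℝ) - (j : ℝ) + 1) ^ p := by
    intro i hiN hipos j hjN
    by_cases hij : i = j
    · subst hij; exact le_rfl
    set d : ℕ → ℝ := fun t => (if t = j then (1:ℝ) else 0) - (if t = i then 1 else 0)
      with hddef
    have hdsum : ∑ t ∈ N, d t = 0 := by
      simp [hddef, Finset.sum_sub_distrib, Finset.sum_ite_eq', hiN, hjN]
    have hB : ∑ t ∈ N, d t * ((T : ℝ) - (t : ℝ) + 1) ^ p =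
        ((T : ℝ) - (j : ℝ) + 1) ^ p - ((T : ℝ) - (i : ℝ) + 1) ^ p := by
      simp [hddef, sub_mul, ite_mul, one_mul, zero_mul, Finset.sum_sub_distrib,
        Finset.sum_ite_eq', hiN, hjN]
    have hC : ∑ t ∈ N, 2*(w t * d t) = 2 * w j - 2 * w i := by
      simp [hddef, mul_sub, mul_ite, mul_one, mul_zero, Finset.sum_sub_distrib,
        Finset.sum_ite_eq', hiN, hjN]
      try ring
    set E := ∑ t ∈ N, (d t)^2 with hEdef
    have hQ : ∀ s : ℝ, ∑ t ∈ N, (w t + s * d t)^2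
        = S + s * (2 * w j - 2 * w i) + s^2 * E := by
      intro s
      rw [← hC, hSdef, hEdef, Finset.mul_sum, Finset.mul_sum,
        ← Finset.sum_add_distrib, ← Finset.sum_add_distrib]
      exact Finset.sum_congr rfl (fun t _ => by ring)
    have hA' : ∀ s : ℝ, ∑ t ∈ N, (w t + s * d t) * ((T : ℝ) - (t : ℝ) + 1) ^ p
        = A + s * (((T : ℝ) - (j : ℝ) + 1) ^ p - ((T : ℝ) - (i : ℝ) + 1) ^ p) := by
      intro s
      rw [← hB, hAdef, Finset.mul_sum, ← Finset.sum_add_distrib]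
      exact Finset.sum_congr rfl (fun t _ => by ring)
    have hsum1 : ∀ s : ℝ, ∑ t ∈ N, (w t + s * d t) = 1 := by
      intro s
      rw [Finset.sum_add_distrib, ← Finset.mul_sum, hdsum, hw_sum]
      ring
    have hfeas : ∀ s : ℝ, 0 ≤ s → s ≤ w i → ∀ t, 0 ≤ w t + s * d t := by
      intro s hs0 hs1 t
      rcases eq_or_ne t i with rfl | hti
      · have : d t = -1 := by simp [hddef, hij]
        rw [this]; linarith
      · rcases eq_or_ne t j with rfl | htj
        · have : d t = 1 := by
            simp [hddef]
            omega
          rw [this]; have := hw_nn t; linarith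
        · have : d t = 0 := by simp [hddef, hti, htj]
          rw [this]; have := hw_nn t; linarith
    have happ : ∀ s : ℝ, F (fun t => w t + s * d t)
        = (S + s * (2 * w j - 2 * w i) + s^2 * E)⁻¹ *
          (max (ε - (A + s * (((T : ℝ) - (j : ℝ) + 1) ^ p - ((T : ℝ) - (i : ℝ) + 1) ^ p))
            ^ (1/p) * ρ) 0) ^ (2*p) := by
      intro s
      rw [hF]
      rw [hQ s, hA' s]
    have h00 : (fun t => w t + (0:ℝ) * d t) = w := by
      funext t; simp
    have hmx : ∀ s : ℝ, 0 ≤ s → s ≤ w i →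
        F (fun t => w t + s * d t) ≤ F (fun t => w t + (0:ℝ) * d t) := by
      intro s hs0 hs1
      rw [h00]
      exact hw_max _ (hfeas s hs0 hs1) (hsum1 s)
    have hres := aux_deriv p ε ρ hp hρ S (2 * w j - 2 * w i) E A
      (((T : ℝ) - (j : ℝ) + 1) ^ p - ((T : ℝ) - (i : ℝ) + 1) ^ p) hS hA hslack
      (fun s => F (fun t => w t + s * d t)) happ (w i) hipos hmx
    rw [← hGdef, ← hβdef] at hres
    nlinarith [hres]
  -- assemble constants
  refine ⟨(2*G*(w i₀) + S*β*((T : ℝ) - (i₀ : ℝ) + 1) ^ p) / (2*G), S*β/(2*G), ?_, ?_, ?_⟩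
  · apply div_nonneg _ (by positivity)
    have := ha_pos i₀ hi₀N
    have h1 : 0 ≤ S*β := by positivity
    nlinarith
  · positivity
  · intro t htN
    rcases lt_or_eq_of_le (hw_nn t) with htpos | htzero
    · have e1 := key t htN htpos i₀ hi₀N
      have e2 := key i₀ hi₀N hi₀ t htN
      have heq : 2*G*(w t) + S*β*((T : ℝ) - (t : ℝ) + 1) ^ p
          = 2*G*(w i₀) + S*β*((T : ℝ) - (i₀ : ℝ) + 1) ^ p := le_antisymm e1 e2
      rw [max_eq_left]
      · field_simp
        linarith [heq]
      · have hval : (2*G*(w i₀) + S*β*((T : ℝ) - (i₀ : ℝ) + 1) ^ p) / (2*G)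
            - S*β/(2*G) * ((T : ℝ) - (t : ℝ) + 1) ^ p = w t := by
          field_simp
          linarith [heq]
        rw [hval]; exact htpos.le
    · have e2 := key i₀ hi₀N hi₀ t htN
      have h2G : (0:ℝ) < 2*G := by positivity
      rw [← htzero]
      rw [max_eq_right]
      rw [sub_nonpos, div_le_iff₀ h2G]
      have hrw : S*β/(2*G) * ((T : ℝ) - (t : ℝ) + 1) ^ p * (2*G)
          = S*β*((T : ℝ) - (t : ℝ) + 1) ^ p := by
        field_simp
      rw [hrw]
      rw [← htzero] at e2
      linarith [e2]
end

section
/- Fix ε, ρ > 0 with ε/ρ > 1. The function h(α) = (2/α − 1)(ε − ρ/α)² over α ∈ (ρ/ε, 1] attains its maximum at α = min{3/(ε/ρ + 1), 1} (equivalently, at the projection of 3/(ε/ρ+1) onto [ρ/ε, 1]). -/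
/-- The limiting exponential-smoothing objective `h(α) = (2/α - 1)(ε - ρ/α)²` over
`α ∈ (ρ/ε, 1]` attains its maximum at `α = min {3/(ε/ρ + 1), 1}`. -/
theorem stmt_19 (ε ρ : ℝ) (hε : 0 < ε) (hρ : 0 < ρ) (hratio : 1 < ε / ρ)
    (h : ℝ → ℝ) (hh : ∀ α, h α = (2 / α - 1) * (ε - ρ / α) ^ 2) :
    ∀ α, ρ / ε < α → α ≤ 1 → h α ≤ h (min (3 / (ε / ρ + 1)) 1) := by
  intro α hα1 hα2
  have hρε : ρ < ε := by
    have := (lt_div_iff₀ hρ).mp hratio; linarith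
  have hα0 : 0 < α := lt_trans (div_pos hρ hε) hα1
  have hεα : ρ < ε * α := by
    have := (div_lt_iff₀ hε).mp hα1; linarith
  have hαcube : (0:ℝ) < α ^ 3 := pow_pos hα0 3
  have hkey : h α = ((2 - α) * (ε * α - ρ) ^ 2) / α ^ 3 := by
    rw [hh]; field_simp [hα0.ne']
  rcases le_or_gt (3 / (ε / ρ + 1)) 1 with hc | hc
  · -- maximizer is interior: 3/(ε/ρ+1)
    rw [min_eq_left hc]
    have hr1 : (0:ℝ) < ε / ρ + 1 := by positivity
    have hβval : h (3 / (ε / ρ + 1)) = (2 * ε - ρ) ^ 3 / (27 * ρ) := by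
      rw [hh]
      field_simp
      ring
    rw [hkey, hβval]
    rw [div_le_div_iff₀ hαcube (by positivity)]
    -- AM-GM: with x = (2-α)ρ, y = εα - ρ, need 27 x y² ≤ (x+2y)³
    nlinarith [mul_nonneg (sq_nonneg ((2 - α) * ρ - (ε * α - ρ)))
        (by nlinarith : (0:ℝ) ≤ (2 - α) * ρ + 8 * (ε * α - ρ)),
      sq_nonneg (ε * α - ρ), mul_pos hρ hα0, sq_nonneg α]
  · -- maximizer is 1
    rw [min_eq_right hc.le]
    have hr2 : ε ≤ 2 * ρ := by
      by_contra hcon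
      push_neg at hcon
      have h2 : 2 < ε / ρ := by rw [lt_div_iff₀ hρ]; linarith
      have : 3 / (ε / ρ + 1) < 1 := by
        rw [div_lt_one (by linarith)]; linarith
      linarith
    have h1 : h 1 = (ε - ρ) ^ 2 := by rw [hh]; norm_num
    have hu : (0:ℝ) ≤ ε * α - ρ := le_of_lt (by linarith)
    have hv : (0:ℝ) ≤ 1 - α := by linarith
    have hw : (0:ℝ) ≤ 2 * ρ - ε := by linarith
    have hL : (0:ℝ) ≤ 2 * ε ^ 2 - 2 * ε * ρ + ρ ^ 2 := by nlinarith [sq_nonneg (ε - ρ)]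
    have hQ : 0 ≤ -(2 * ε ^ 2 - 2 * ε * ρ + ρ ^ 2) * α ^ 2
        + (4 * ε * ρ - ρ ^ 2) * α - 2 * ρ ^ 2 := by
      have hD : (0:ℝ) < ε ^ 2 * (ε - ρ) := mul_pos (pow_pos hε 2) (by linarith)
      have hA : (0:ℝ) ≤ (ε * α - ρ) * (2 * ρ - ε) * (ε ^ 2 * (ε - ρ)) :=
        mul_nonneg (mul_nonneg hu hw) hD.le
      have hB : (0:ℝ) ≤ ρ ^ 3 * (ε - ρ) * (ε * (1 - α)) :=
        mul_nonneg (mul_nonneg (by positivity) (by linarith)) (mul_nonneg hε.le hv)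
      have hC : (0:ℝ) ≤ (2 * ε ^ 2 - 2 * ε * ρ + ρ ^ 2) * (ε * α - ρ)
          * (ε * (1 - α)) * (ε - ρ) :=
        mul_nonneg (mul_nonneg (mul_nonneg hL hu) (mul_nonneg hε.le hv))
          (by linarith)
      nlinarith [hA, hB, hC, hD, mul_pos hD hD]
    rw [hkey, h1, div_le_iff₀ hαcube]
    nlinarith [mul_nonneg hv hQ]
end
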